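/- If X is a subword (not necessarily contiguous) of Y, then X ≤ Y in the path order; and if X ≤ Y then |X| ≤ |Y|. -/

import Mathlib

inductive Symb : Type
  | plus | minus | star
deriving DecidableEq


/-- the dual of a symbol: `+` ↦ `-`, `-` ↦ `+`, `*` ↦ `*` -/
def dualSym : Symb → Symb
  | Symb.plus => Symb.minus
  | Symb.minus => Symb.plus
  | Symb.star => Symb.star

/-- the dual (involution) of a word: reverse and dualize each symbol -/
def dualWord (W : List Symb) : List Symb := (W.map dualSym).reverse

/-- the arc relation of the reflexive path `P(W)` on vertices `{0,…,|W|}` -/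
def pathArc (W : List Symb) (i j : ℕ) : Prop :=
  i ≤ W.length ∧ j ≤ W.length ∧
    (i = j ∨ (j = i + 1 ∧ (W[i]? = some Symb.plus ∨ W[i]? = some Symb.star))
           ∨ (i = j + 1 ∧ (W[j]? = some Symb.minus ∨ W[j]? = some Symb.star)))

/-- `f` is an end-point preserving homomorphism from the path `P(V)` onto the path `P(U)` -/
def EPHom (V U : List Symb) (f : ℕ → ℕ) : Prop :=
  f 0 = 0 ∧ f V.length = U.length ∧
  (∀ i j, pathArc V i j → pathArc U (f i) (f j)) ∧
  (∀ m, m ≤ U.length → ∃ i, i ≤ V.length ∧ f i = m)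

/-- the order on words: `U ≤ V` iff there is an end-point preserving
homomorphism from `P(V)` onto `P(U)` -/
def wle (U V : List Symb) : Prop := ∃ f, EPHom V U f

lemma arc_shift (a : Symb) (X : List Symb) {p q : ℕ} (h : pathArc X p q) :
    pathArc (a :: X) (p + 1) (q + 1) := by
  obtain ⟨hp, hq, h⟩ := h
  refine ⟨by simp; omega, by simp; omega, ?_⟩
  rcases h with h | ⟨h, hc⟩ | ⟨h, hc⟩
  · exact Or.inl (by omega)
  · exact Or.inr (Or.inl ⟨by omega, by simpa using hc⟩)
  · exact Or.inr (Or.inr ⟨by omega, by simpa using hc⟩)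

lemma arc_unshift (a : Symb) (Y : List Symb) {p q : ℕ}
    (h : pathArc (a :: Y) (p + 1) (q + 1)) : pathArc Y p q := by
  obtain ⟨hp, hq, h⟩ := h
  refine ⟨by simp at hp; omega, by simp at hq; omega, ?_⟩
  rcases h with h | ⟨h, hc⟩ | ⟨h, hc⟩
  · exact Or.inl (by omega)
  · exact Or.inr (Or.inl ⟨by omega, by simpa using hc⟩)
  · exact Or.inr (Or.inr ⟨by omega, by simpa using hc⟩)

lemma arc_loop (X : List Symb) {p : ℕ} (h : p ≤ X.length) : pathArc X p p :=
  ⟨h, h, Or.inl rfl⟩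

lemma wle_refl (X : List Symb) : wle X X :=
  ⟨id, rfl, rfl, fun _ _ h => h, fun m hm => ⟨m, hm, rfl⟩⟩

lemma wle_cons (a : Symb) {X Y : List Symb} (h : wle X Y) : wle X (a :: Y) := by
  obtain ⟨g, h0, hend, harc, hsurj⟩ := h
  refine ⟨fun i => g (i - 1), by simpa using h0, by simpa using hend, ?_, ?_⟩
  · intro i j hij
    match i, j with
    | 0, 0 => simpa [h0] using arc_loop X (Nat.zero_le _)
    | 0, j + 1 =>
      have : j = 0 := by
        rcases hij.2.2 with h | ⟨h, _⟩ | ⟨h, _⟩ <;> omega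
      subst this
      simpa [h0] using arc_loop X (Nat.zero_le _)
    | i + 1, 0 =>
      have : i = 0 := by
        rcases hij.2.2 with h | ⟨h, _⟩ | ⟨h, _⟩ <;> omega
      subst this
      simpa [h0] using arc_loop X (Nat.zero_le _)
    | i + 1, j + 1 =>
      simpa using harc i j (arc_unshift a Y hij)
  · intro m hm
    obtain ⟨i, hi, hgi⟩ := hsurj m hm
    exact ⟨i + 1, by simp; omega, by simpa using hgi⟩

lemma wle_cons₂ (a : Symb) {X Y : List Symb} (h : wle X Y) : wle (a :: X) (a :: Y) := by
  obtain ⟨g, h0, hend, harc, hsurj⟩ := h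
  refine ⟨fun i => if i = 0 then 0 else g (i - 1) + 1, by simp, by simp [hend], ?_, ?_⟩
  · intro i j hij
    match i, j with
    | 0, 0 => simpa using arc_loop (a :: X) (Nat.zero_le _)
    | 0, j + 1 =>
      have hj : j = 0 := by
        rcases hij.2.2 with h | ⟨h, _⟩ | ⟨h, _⟩ <;> omega
      subst hj
      have hc : (a :: Y)[0]? = some Symb.plus ∨ (a :: Y)[0]? = some Symb.star := by
        rcases hij.2.2 with h | ⟨_, hc⟩ | ⟨h, _⟩
        · omega
        · exact hc
        · omega
      simp only [if_pos rfl, if_neg one_ne_zero]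
      refine ⟨by simp, by simp [h0], Or.inr (Or.inl ⟨by simp [h0], ?_⟩)⟩
      simpa using hc
    | i + 1, 0 =>
      have hi : i = 0 := by
        rcases hij.2.2 with h | ⟨h, _⟩ | ⟨h, _⟩ <;> omega
      subst hi
      have hc : (a :: Y)[0]? = some Symb.minus ∨ (a :: Y)[0]? = some Symb.star := by
        rcases hij.2.2 with h | ⟨h, _⟩ | ⟨_, hc⟩
        · omega
        · omega
        · exact hc
      simp only [if_pos rfl, if_neg one_ne_zero]
      refine ⟨by simp [h0], by simp, Or.inr (Or.inr ⟨by simp [h0], ?_⟩)⟩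
      simpa using hc
    | i + 1, j + 1 =>
      simpa using arc_shift a X (harc i j (arc_unshift a Y hij))
  · intro m hm
    match m with
    | 0 => exact ⟨0, by simp, by simp⟩
    | m + 1 =>
      obtain ⟨i, hi, hgi⟩ := hsurj m (by simp at hm; omega)
      exact ⟨i + 1, by simp; omega, by simp [hgi]⟩

/-- If `X` is a subword of `Y` then `X ≤ Y`; and if `X ≤ Y` then `|X| ≤ |Y|`. -/
theorem stmt_5 (X Y : List Symb) :
    (X.Sublist Y → wle X Y) ∧ (wle X Y → X.length ≤ Y.length) := by
  constructor
  · intro hsub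
    induction hsub with
    | slnil => exact wle_refl []
    | cons a _ ih => exact wle_cons a ih
    | cons_cons a _ ih => exact wle_cons₂ a ih
  · rintro ⟨f, h0, hend, harc, hsurj⟩
    have key : ∀ m : Fin (X.length + 1), ∃ i : Fin (Y.length + 1), f i = m := by
      intro m
      obtain ⟨i, hi, hfi⟩ := hsurj m (by omega)
      exact ⟨⟨i, by omega⟩, by simp [hfi]⟩
    choose g hg using key
    have hinj : Function.Injective g := fun a b hab => by
      have : (a : ℕ) = b := by rw [← hg a, ← hg b, hab]
      exact Fin.ext this
    have := Fintype.card_le_of_injective g hinj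
    simpa using this
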